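/- arXiv:0810.4544 — 3 statements merged into one kernel-verified Lean document; each statement's English description precedes it below -/
import Mathlib

section
/- Let A be an alternative ring. Then any subring of A generated by two elements is associative (Artin's theorem). -/
namespace ArtinAux

variable {A : Type*} [NonUnitalNonAssocRing A]

/-- The associator. -/
def asc (x y z : A) : A := x * y * z - x * (y * z)

lemma asc_eq_zero {x y z : A} (h : asc x y z = 0) : x * y * z = x * (y * z) := by
  have h' : x * y * z - x * (y * z) = 0 := h
  exact sub_eq_zero.mp h'

/-- Teichmüller identity, valid in any (non-unital, non-associative) ring. -/
lemma teich (w x y z : A) :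
    asc (w*x) y z - asc w (x*y) z + asc w x (y*z) = w * asc x y z + asc w x y * z := by
  simp only [asc, mul_sub, sub_mul]; abel

section Alt

variable (alt₁ : ∀ x y : A, (x * x) * y = x * (x * y))
variable (alt₂ : ∀ x y : A, (y * x) * x = y * (x * x))

include alt₁ alt₂

lemma asc_ll (x y : A) : asc x x y = 0 := by
  simp only [asc]; rw [alt₁ x y, sub_self]

lemma asc_rr (x y : A) : asc y x x = 0 := by
  simp only [asc]; rw [alt₂ x y, sub_self]

lemma asc_swap12 (x y z : A) : asc y x z = - asc x y z := by
  linear_combination (norm := (simp only [asc, add_mul, mul_add]; abel))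
    alt₁ (x+y) z - alt₁ x z - alt₁ y z

lemma asc_swap23 (x y z : A) : asc x z y = - asc x y z := by
  linear_combination (norm := (simp only [asc, add_mul, mul_add]; abel))
    alt₂ (y+z) x - alt₂ y x - alt₂ z x

lemma asc_flex (x y : A) : asc x y x = 0 := by
  rw [asc_swap23 alt₁ alt₂ x x y, asc_ll alt₁ alt₂, neg_zero]

lemma asc_rot (x y z : A) : asc x y z = asc y z x := by
  rw [asc_swap23 alt₁ alt₂ y x z, asc_swap12 alt₁ alt₂ x y z, neg_neg]

lemma asc_xx (x y z : A) : asc x (x*y) z = asc (x*x) y z - x * asc x y z := by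
  linear_combination (norm :=
      (simp only [asc, add_mul, mul_add, mul_sub, sub_mul, mul_zero, zero_mul, mul_neg, neg_mul]; abel))
    -(teich x x y z) + asc_ll alt₁ alt₂ x (y*z) - asc_ll alt₁ alt₂ x y * z

/-- Moufang-type identity: `(x, yx, z) = x (x,y,z)`. -/
lemma M1 (x y z : A) : asc x (y*x) z = x * asc x y z := by
  linear_combination (norm :=
      (simp only [asc, add_mul, mul_add, mul_sub, sub_mul, mul_zero, zero_mul, mul_neg, neg_mul]; abel))
    -(teich x y x z) + asc_swap12 alt₁ alt₂ x (x*y) z + asc_swap23 alt₁ alt₂ x (x*z) y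
      - x * asc_swap12 alt₁ alt₂ x y z - asc_flex alt₁ alt₂ x y * z
      - asc_xx alt₁ alt₂ x y z - asc_xx alt₁ alt₂ x z y
      - asc_swap23 alt₁ alt₂ (x*x) y z + x * asc_swap23 alt₁ alt₂ x y z

/-- Moufang-type identity: `(x, xy, z) = (x,y,z) x`. -/
lemma M2 (x y z : A) : asc x (x*y) z = asc x y z * x := by
  linear_combination (norm :=
      (simp only [asc, add_mul, mul_add, mul_sub, sub_mul, mul_zero, zero_mul, mul_neg, neg_mul]; abel))
    asc_xx alt₁ alt₂ x y z + teich y z x x - asc_rr alt₁ alt₂ x (y*z) + y * asc_rr alt₁ alt₂ x z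
      + asc_rot alt₁ alt₂ y (z*x) x + asc_rot alt₁ alt₂ (z*x) x y
      + asc_swap23 alt₁ alt₂ x (z*x) y - M1 alt₁ alt₂ x z y - x * asc_swap23 alt₁ alt₂ x y z
      - asc_rot alt₁ alt₂ y z (x*x) - asc_rot alt₁ alt₂ z (x*x) y
      - asc_rot alt₁ alt₂ x y z * x

end Alt

/-- Monomials (with degree) in two generators. -/
inductive W (a b : A) : ℕ → A → Prop
  | base_a : W a b 1 a
  | base_b : W a b 1 b
  | mul {m k : ℕ} {x y : A} : W a b m x → W a b k y → W a b (m + k) (x * y)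

namespace W

variable {a b : A}

lemma cast {d d' : ℕ} {x : A} (h : d = d') (hx : W a b d x) : W a b d' x := h ▸ hx

lemma one_le {d : ℕ} {x : A} (h : W a b d x) : 1 ≤ d := by
  induction h with
  | base_a => exact le_refl 1
  | base_b => exact le_refl 1
  | mul h1 h2 ih1 ih2 => omega

lemma of_letter {e : A} (he : e = a ∨ e = b) : W a b 1 e := by
  rcases he with rfl | rfl
  · exact base_a
  · exact base_b

lemma deg_one {d : ℕ} {x : A} (h : W a b d x) (hd : d = 1) : x = a ∨ x = b := by
  induction h with
  | base_a => exact Or.inl rfl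
  | base_b => exact Or.inr rfl
  | mul h1 h2 ih1 ih2 =>
    have := h1.one_le; have := h2.one_le
    exact absurd hd (by omega)

lemma head {d : ℕ} {u : A} (h : W a b d u) :
    2 ≤ d →
    (∀ (d₁ d₂ d₃ : ℕ) (p q r : A), W a b d₁ p → W a b d₂ q → W a b d₃ r →
      d₁ + d₂ + d₃ ≤ d → p * q * r = p * (q * r)) →
    ∃ e u₁, (e = a ∨ e = b) ∧ W a b (d - 1) u₁ ∧ u = e * u₁ := by
  induction h with
  | base_a => intro hd _; exact absurd hd (by omega)
  | base_b => intro hd _; exact absurd hd (by omega)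
  | @mul m k x y hx hy ihx ihy =>
    intro _ H
    have h1x := hx.one_le
    have h1y := hy.one_le
    by_cases hm : m = 1
    · exact ⟨x, y, hx.deg_one hm, hy.cast (by omega), rfl⟩
    · obtain ⟨e, x₁, he, hx₁, hxe⟩ := ihx (by omega)
        (fun d₁ d₂ d₃ p q r h1 h2 h3 hle => H d₁ d₂ d₃ p q r h1 h2 h3 (by omega))
      refine ⟨e, x₁ * y, he, (hx₁.mul hy).cast (by omega), ?_⟩
      have := H 1 (m-1) k e x₁ y (of_letter he) hx₁ hy (by omega)
      rw [hxe, this]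

lemma last {d : ℕ} {u : A} (h : W a b d u) :
    2 ≤ d →
    (∀ (d₁ d₂ d₃ : ℕ) (p q r : A), W a b d₁ p → W a b d₂ q → W a b d₃ r →
      d₁ + d₂ + d₃ ≤ d → p * q * r = p * (q * r)) →
    ∃ u₁ e, W a b (d - 1) u₁ ∧ (e = a ∨ e = b) ∧ u = u₁ * e := by
  induction h with
  | base_a => intro hd _; exact absurd hd (by omega)
  | base_b => intro hd _; exact absurd hd (by omega)
  | @mul m k x y hx hy ihx ihy =>
    intro _ H
    have h1x := hx.one_le
    have h1y := hy.one_le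
    by_cases hk : k = 1
    · exact ⟨x, y, hx.cast (by omega), hy.deg_one hk, rfl⟩
    · obtain ⟨y₁, e, hy₁, he, hye⟩ := ihy (by omega)
        (fun d₁ d₂ d₃ p q r h1 h2 h3 hle => H d₁ d₂ d₃ p q r h1 h2 h3 (by omega))
      refine ⟨x * y₁, e, (hx.mul hy₁).cast (by omega), he, ?_⟩
      have := H m (k-1) 1 x y₁ e hx hy₁ (of_letter he) (by omega)
      rw [hye, ← this]

end W

section Main

variable (alt₁ : ∀ x y : A, (x * x) * y = x * (x * y))
variable (alt₂ : ∀ x y : A, (y * x) * x = y * (x * x))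

include alt₁ alt₂

set_option maxHeartbeats 2000000 in
/-- Artin's theorem for monomials: all associators of monomials vanish. -/
theorem mono_asc (a b : A) :
    ∀ (n d₁ d₂ d₃ : ℕ) (p q r : A), W a b d₁ p → W a b d₂ q → W a b d₃ r →
      d₁ + d₂ + d₃ ≤ n → asc p q r = 0 := by
  intro n
  induction n using Nat.strongRecOn with
  | ind n IH =>
  intro d₁ d₂ d₃ p q r hp hq hr hsum
  rcases lt_or_eq_of_le hsum with hlt | heq
  · exact IH (d₁+d₂+d₃) hlt d₁ d₂ d₃ p q r hp hq hr le_rfl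
  have IH' : ∀ {d₁ d₂ d₃ : ℕ} (p q r : A), W a b d₁ p → W a b d₂ q → W a b d₃ r →
      d₁ + d₂ + d₃ < n → asc p q r = 0 :=
    fun p q r h1 h2 h3 hlt => IH _ hlt _ _ _ p q r h1 h2 h3 le_rfl
  have EQ : ∀ {d₁ d₂ d₃ : ℕ} (p q r : A), W a b d₁ p → W a b d₂ q → W a b d₃ r →
      d₁ + d₂ + d₃ < n → p * q * r = p * (q * r) :=
    fun p q r h1 h2 h3 hlt => asc_eq_zero (IH' p q r h1 h2 h3 hlt)
  have head' : ∀ {d : ℕ} {u : A}, W a b d u → 2 ≤ d → d < n →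
      ∃ e u₁, (e = a ∨ e = b) ∧ W a b (d - 1) u₁ ∧ u = e * u₁ :=
    fun h h2 hlt => h.head h2
      (fun d₁ d₂ d₃ p q r h1 h2 h3 hle => EQ p q r h1 h2 h3 (lt_of_le_of_lt hle hlt))
  have last' : ∀ {d : ℕ} {u : A}, W a b d u → 2 ≤ d → d < n →
      ∃ u₁ e, W a b (d - 1) u₁ ∧ (e = a ∨ e = b) ∧ u = u₁ * e :=
    fun h h2 hlt => h.last h2
      (fun d₁ d₂ d₃ p q r h1 h2 h3 hle => EQ p q r h1 h2 h3 (lt_of_le_of_lt hle hlt))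
  -- Key lemma: associators with a generator in the first slot vanish.
  have Dlem : ∀ (du dv : ℕ) (c u v : A), (c = a ∨ c = b) → W a b du u → W a b dv v →
      1 + du + dv = n → asc c u v = 0 := by
    intro du
    induction du using Nat.strongRecOn with
    | ind du IHd =>
    intro dv c u v hc hu hv hn
    have hdu1 := hu.one_le
    have hdv1 := hv.one_le
    by_cases hdu : du = 1
    · have hul := hu.deg_one hdu
      by_cases hcu : u = c
      · rw [hcu]; exact asc_ll alt₁ alt₂ c v
      by_cases hdv : dv = 1
      · have hvl := hv.deg_one hdv
        by_cases hvc : v = c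
        · rw [hvc]; exact asc_flex alt₁ alt₂ c u
        by_cases hvu : v = u
        · rw [hvu]; exact asc_rr alt₁ alt₂ u c
        · exfalso
          rcases hc with rfl | rfl <;> rcases hul with rfl | rfl <;>
            rcases hvl with rfl | rfl <;> simp_all
      · obtain ⟨f, v₁, hf, hv₁, hveq⟩ := head' hv (by omega) (by omega)
        by_cases hfc : f = c
        · rw [hveq, hfc, asc_swap23 alt₁ alt₂ c (c*v₁) u, M2 alt₁ alt₂ c v₁ u,
            IH' c v₁ u (W.of_letter hc) hv₁ hu (by omega), zero_mul, neg_zero]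
        · have hfu : f = u := by
            rcases hc with rfl | rfl <;> rcases hul with rfl | rfl <;>
              rcases hf with rfl | rfl <;> simp_all
          rw [hveq, hfu, asc_rot alt₁ alt₂ c u (u*v₁), M2 alt₁ alt₂ u v₁ c,
            IH' u v₁ c (W.of_letter hul) hv₁ (W.of_letter hc) (by omega), zero_mul]
    · -- du ≥ 2
      obtain ⟨e, u₁, he, hu₁, hue⟩ := head' hu (by omega) (by omega)
      obtain ⟨u', e₂, hu', he₂, hue₂⟩ := last' hu (by omega) (by omega)
      by_cases hec : e = c
      · rw [hue, hec, M2 alt₁ alt₂ c u₁ v,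
          IH' c u₁ v (W.of_letter hc) hu₁ hv (by omega), zero_mul]
      by_cases he₂c : e₂ = c
      · rw [hue₂, he₂c, M1 alt₁ alt₂ c u' v,
          IH' c u' v (W.of_letter hc) hu' hv (by omega), mul_zero]
      have hee : e₂ = e := by
        rcases hc with rfl | rfl <;> rcases he with rfl | rfl <;>
          rcases he₂ with rfl | rfl <;> simp_all
      have z3 : asc c e u₁ = 0 :=
        IH' c e u₁ (W.of_letter hc) (W.of_letter he) hu₁ (by omega)
      have step1 : asc c u v = asc (c*e) u₁ v := by
        have t := teich c e u₁ v
        have z1 : asc c e (u₁*v) = 0 :=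
          IHd 1 (by omega) (du-1+dv) c e (u₁*v) hc (W.of_letter he) (hu₁.mul hv) (by omega)
        have z2 : asc e u₁ v = 0 :=
          IH' e u₁ v (W.of_letter he) hu₁ hv (by omega)
        rw [hue]
        linear_combination (norm :=
            (simp only [asc, add_mul, mul_add, mul_sub, sub_mul, mul_zero, zero_mul,
              mul_neg, neg_mul]; abel))
          -t + z1 - c * z2 - z3 * v
      by_cases hdv : dv = 1
      · have hvl := hv.deg_one hdv
        by_cases hvc : v = c
        · rw [hvc]; exact asc_flex alt₁ alt₂ c u
        · have hve : v = e := by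
            rcases hc with rfl | rfl <;> rcases he with rfl | rfl <;>
              rcases hvl with rfl | rfl <;> simp_all
          rw [step1, hve, ← asc_rot alt₁ alt₂ e (c*e) u₁, M1 alt₁ alt₂ e c u₁,
            IH' e c u₁ (W.of_letter he) (W.of_letter hc) hu₁ (by omega), mul_zero]
      · obtain ⟨v', g, hv', hg, hveq⟩ := last' hv (by omega) (by omega)
        by_cases hgc : g = c
        · rw [hveq, hgc, asc_swap23 alt₁ alt₂ c (v'*c) u, M1 alt₁ alt₂ c v' u,
            IH' c v' u (W.of_letter hc) hv' hu (by omega), mul_zero, neg_zero]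
        · have hge : g = e := by
            rcases hc with rfl | rfl <;> rcases he with rfl | rfl <;>
              rcases hg with rfl | rfl <;> simp_all
          rw [step1, hveq, hge]
          -- goal : asc (c*e) u₁ (v'*e) = 0
          have hce : W a b 2 ((c : A)*e) := ((W.of_letter hc).mul (W.of_letter he)).cast rfl
          have z4 : asc u₁ v' e = 0 :=
            IH' u₁ v' e hu₁ hv' (W.of_letter he) (by omega)
          have z5 : asc (c*e) u₁ v' = 0 :=
            IH' (c*e) u₁ v' hce hu₁ hv' (by omega)
          have tA : asc (c*e) (u₁*v') e = 0 := by
            rw [← asc_rot alt₁ alt₂ e (c*e) (u₁*v'), M1 alt₁ alt₂ e c (u₁*v'),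
              IH' e c (u₁*v') (W.of_letter he) (W.of_letter hc) (hu₁.mul hv') (by omega),
              mul_zero]
          have tB : asc ((c*e)*u₁) v' e = 0 := by
            have e1 : (c*e)*u₁ = (c*u')*e := by
              have q1 : c*e*u₁ = c*(e*u₁) :=
                EQ c e u₁ (W.of_letter hc) (W.of_letter he) hu₁ (by omega)
              have q2 : c*u'*e = c*(u'*e) :=
                EQ c u' e (W.of_letter hc) hu' (W.of_letter he) (by omega)
              rw [q1, ← hue, hue₂, hee, ← q2]
            rw [e1, ← asc_rot alt₁ alt₂ e ((c*u')*e) v', M1 alt₁ alt₂ e (c*u') v',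
              IH' e (c*u') v' (W.of_letter he)
                (((W.of_letter hc).mul hu').cast (show 1+(du-1)=du by omega)) hv' (by omega), mul_zero]
          have t2 := teich (c*e) u₁ v' e
          linear_combination (norm :=
              (simp only [asc, add_mul, mul_add, mul_sub, sub_mul, mul_zero, zero_mul,
                mul_neg, neg_mul]; abel))
            t2 - tB + tA + (c*e) * z4 + z5 * e
  -- main case
  have hd₂ := hq.one_le
  have hd₃ := hr.one_le
  by_cases hd₁ : d₁ = 1
  · exact Dlem d₂ d₃ p q r (hp.deg_one hd₁) hq hr (by omega)
  · have hd₁1 := hp.one_le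
    obtain ⟨x, p₁, hx, hp₁, hpe⟩ := head' hp (by omega) (by omega)
    rw [hpe]
    have D1 : asc x (p₁*q) r = 0 :=
      Dlem ((d₁-1)+d₂) d₃ x (p₁*q) r hx (hp₁.mul hq) hr (by omega)
    have D2 : asc x p₁ (q*r) = 0 :=
      Dlem (d₁-1) (d₂+d₃) x p₁ (q*r) hx hp₁ (hq.mul hr) (by omega)
    have z : asc p₁ q r = 0 := IH' p₁ q r hp₁ hq hr (by omega)
    have z' : asc x p₁ q = 0 := IH' x p₁ q (W.of_letter hx) hp₁ hq (by omega)
    linear_combination (norm :=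
        (simp only [asc, add_mul, mul_add, mul_sub, sub_mul, mul_zero, zero_mul,
          mul_neg, neg_mul]; abel))
      teich x p₁ q r + D1 - D2 + x * z + z' * r

end Main

end ArtinAux

open ArtinAux in
/-- Artin's theorem: in an alternative ring, the subring generated by any two
elements is associative. -/
theorem stmt_9 {A : Type*} [NonUnitalNonAssocRing A]
    (alt₁ : ∀ x y : A, (x * x) * y = x * (x * y))
    (alt₂ : ∀ x y : A, (y * x) * x = y * (x * x))
    (a b : A) (S : Set A)
    (hS : S = ⋂₀ {T : Set A | a ∈ T ∧ b ∈ T ∧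
        (∀ u ∈ T, ∀ v ∈ T, u * v ∈ T) ∧
        (∀ u ∈ T, ∀ v ∈ T, u + v ∈ T) ∧
        (∀ u ∈ T, -u ∈ T)}) :
    ∀ x ∈ S, ∀ y ∈ S, ∀ z ∈ S, (x * y) * z = x * (y * z) := by
  classical
  set M : Set A := {x | ∃ d, W a b d x} with hM
  -- the additive closure of the set of monomials
  set T : AddSubgroup A := AddSubgroup.closure M with hT
  have hmulM : ∀ x ∈ M, ∀ y ∈ M, x * y ∈ M := by
    rintro x ⟨d₁, h₁⟩ y ⟨d₂, h₂⟩
    exact ⟨d₁ + d₂, h₁.mul h₂⟩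
  have hmul : ∀ x ∈ T, ∀ y ∈ T, x * y ∈ T := by
    intro x hx
    refine AddSubgroup.closure_induction ?_ ?_ ?_ ?_ hx
    · intro u hu y hy
      refine AddSubgroup.closure_induction ?_ ?_ ?_ ?_ hy
      · intro v hv
        exact AddSubgroup.subset_closure (hmulM u hu v hv)
      · rw [mul_zero]; exact zero_mem T
      · intro v w _ _ h1 h2
        rw [mul_add]; exact add_mem h1 h2
      · intro v _ h1
        rw [mul_neg]; exact neg_mem h1
    · intro y _; rw [zero_mul]; exact zero_mem T
    · intro u v _ _ h1 h2 y hy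
      rw [add_mul]; exact add_mem (h1 y hy) (h2 y hy)
    · intro u _ h1 y hy
      rw [neg_mul]; exact neg_mem (h1 y hy)
  -- associator vanishes on T
  have base : ∀ x ∈ M, ∀ y ∈ M, ∀ z ∈ M, asc x y z = 0 := by
    rintro x ⟨d₁, h₁⟩ y ⟨d₂, h₂⟩ z ⟨d₃, h₃⟩
    exact mono_asc alt₁ alt₂ a b (d₁+d₂+d₃) d₁ d₂ d₃ x y z h₁ h₂ h₃ le_rfl
  have V3 : ∀ x ∈ M, ∀ y ∈ M, ∀ z ∈ T, asc x y z = 0 := by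
    intro x hx y hy z hz
    refine AddSubgroup.closure_induction ?_ ?_ ?_ ?_ hz
    · exact base x hx y hy
    · simp [asc]
    · intro u v _ _ h1 h2
      have : asc x y (u + v) = asc x y u + asc x y v := by
        simp only [asc, mul_add]; abel
      rw [this, h1, h2, add_zero]
    · intro u _ h1
      have : asc x y (-u) = - asc x y u := by
        simp only [asc, mul_neg, neg_mul]; abel
      rw [this, h1, neg_zero]
  have V2 : ∀ x ∈ M, ∀ y ∈ T, ∀ z ∈ T, asc x y z = 0 := by
    intro x hx y hy
    refine AddSubgroup.closure_induction ?_ ?_ ?_ ?_ hy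
    · intro u hu z hz; exact V3 x hx u hu z hz
    · intro z _; simp [asc]
    · intro u v _ _ h1 h2 z hz
      have : asc x (u + v) z = asc x u z + asc x v z := by
        simp only [asc, mul_add, add_mul]; abel
      rw [this, h1 z hz, h2 z hz, add_zero]
    · intro u _ h1 z hz
      have : asc x (-u) z = - asc x u z := by
        simp only [asc, mul_neg, neg_mul]; abel
      rw [this, h1 z hz, neg_zero]
  have V1 : ∀ x ∈ T, ∀ y ∈ T, ∀ z ∈ T, asc x y z = 0 := by
    intro x hx
    refine AddSubgroup.closure_induction ?_ ?_ ?_ ?_ hx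
    · intro u hu; exact V2 u hu
    · intro y _ z _; simp [asc]
    · intro u v _ _ h1 h2 y hy z hz
      have : asc (u + v) y z = asc u y z + asc v y z := by
        simp only [asc, add_mul]; abel
      rw [this, h1 y hy z hz, h2 y hy z hz, add_zero]
    · intro u _ h1 y hy z hz
      have : asc (-u) y z = - asc u y z := by
        simp only [asc, neg_mul]; abel
      rw [this, h1 y hy z hz, neg_zero]
  -- S is contained in T
  have hTmem : (T : Set A) ∈ {T : Set A | a ∈ T ∧ b ∈ T ∧
      (∀ u ∈ T, ∀ v ∈ T, u * v ∈ T) ∧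
      (∀ u ∈ T, ∀ v ∈ T, u + v ∈ T) ∧
      (∀ u ∈ T, -u ∈ T)} := by
    refine ⟨AddSubgroup.subset_closure ⟨1, W.base_a⟩,
      AddSubgroup.subset_closure ⟨1, W.base_b⟩, ?_, ?_, ?_⟩
    · intro u hu v hv; exact hmul u hu v hv
    · intro u hu v hv; exact add_mem hu hv
    · intro u hu; exact neg_mem hu
  have hsub : S ⊆ (T : Set A) := by
    rw [hS]; exact Set.sInter_subset_of_mem hTmem
  intro x hx y hy z hz
  exact asc_eq_zero (V1 x (hsub hx) y (hsub hy) z (hsub hz))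
end

section
/- Let L = M(G, *, g₀) = G ∪ Gu be the Moufang loop obtained from a nonabelian group G by the duplication process, with multiplication g(hu) = (hg)u, (gu)h = (gh*)u, (gu)(hu) = g₀h*g, where * is an involution of G with g₀* = g₀, g₀ ∈ Z(G), and gg* ∈ Z(G) for all g. Then L satisfies the left Moufang identity ((xy)x)z = x(y(xz)). -/
/-- The multiplication of the loop L = M(G, *, g₀) = G ∪ Gu, obtained from a group G
by the duplication process: elements are pairs (g, false) = g and (g, true) = gu. -/
def dupMul {G : Type*} [Group G] (star : G → G) (g₀ : G) :
    G × Bool → G × Bool → G × Bool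
  | (g, false), (h, false) => (g * h, false)
  | (g, false), (h, true) => (h * g, true)
  | (g, true), (h, false) => (g * star h, true)
  | (g, true), (h, true) => (g₀ * star h * g, false)

/-- The loop M(G, *, g₀) obtained by duplicating a nonabelian group G satisfies the
left Moufang identity ((xy)x)z = x(y(xz)). -/
theorem stmt_13 {G : Type*} [Group G] (star : G → G) (g₀ : G)
    (hanti : ∀ a b : G, star (a * b) = star b * star a)
    (hinvol : ∀ a : G, star (star a) = a)
    (hg₀ : star g₀ = g₀)
    (hg₀c : g₀ ∈ Subgroup.center G)
    (hnorm : ∀ g : G, g * star g ∈ Subgroup.center G)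
    (hnab : ∃ a b : G, a * b ≠ b * a) :
    ∀ x y z : G × Bool,
      dupMul star g₀ (dupMul star g₀ (dupMul star g₀ x y) x) z =
        dupMul star g₀ x (dupMul star g₀ y (dupMul star g₀ x z)) := by
  rw [Subgroup.mem_center_iff] at hg₀c
  have hn : ∀ g w : G, w * (g * star g) = (g * star g) * w := fun g w =>
    Subgroup.mem_center_iff.mp (hnorm g) w
  have hsymm : ∀ a : G, star a * a = a * star a := by
    intro a
    refine mul_left_cancel (a := a) ?_
    rw [← mul_assoc]
    exact (hn a a).symm
  have hn' : ∀ g w : G, w * (star g * g) = (star g * g) * w := by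
    intro g w; rw [hsymm]; exact hn g w
  have swap : ∀ d : G, (∀ w : G, w * d = d * w) → ∀ x y : G, x * d * y = x * y * d := by
    intro d hd x y
    rw [mul_assoc, ← hd, ← mul_assoc]
  rintro ⟨a, _ | _⟩ ⟨b, _ | _⟩ ⟨c, _ | _⟩ <;>
    simp only [dupMul, hanti, hinvol, hg₀, Prod.mk.injEq, and_true] <;> group
  · -- b * a * star a * star c = b * star c * star a * a
    calc b * a * star a * star c = b * (a * star a) * star c := by group
      _ = b * star c * (a * star a) := swap _ (hn a) b (star c)
      _ = b * star c * star a * a := by rw [← hsymm]; group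
  · -- g₀ * star c * b * a * star a = a * g₀ * star a * star c * b
    calc g₀ * star c * b * a * star a = g₀ * (star c * b) * (a * star a) := by group
      _ = g₀ * (a * star a) * (star c * b) := (swap _ (hn a) g₀ (star c * b)).symm
      _ = a * g₀ * star a * star c * b := by rw [hg₀c a]; group
  · -- g₀ * star a * a * star b * c = g₀ * star b * c * star a * a
    calc g₀ * star a * a * star b * c = g₀ * (star a * a) * (star b * c) := by group
      _ = g₀ * (star b * c) * (star a * a) := swap _ (hn' a) g₀ (star b * c)
      _ = g₀ * star b * c * star a * a := by group
  · -- c * g₀ * star a * a * star b = a * star a * c * g₀ * star b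
    calc c * g₀ * star a * a * star b = c * g₀ * (star a * a) * star b := by group
      _ = c * g₀ * star b * (star a * a) := swap _ (hn' a) (c * g₀) (star b)
      _ = c * g₀ * star b * (a * star a) := by rw [hsymm]
      _ = (a * star a) * (c * g₀ * star b) := hn a _
      _ = a * star a * c * g₀ * star b := by group
  · -- a * g₀ * star b * a * star c = a * star b * a * star c * g₀
    calc a * g₀ * star b * a * star c = a * g₀ * (star b * a * star c) := by group
      _ = a * (star b * a * star c) * g₀ := swap g₀ hg₀c a _
      _ = a * star b * a * star c * g₀ := by group
  · -- g₀ * star c * a * g₀ * star b * a = g₀ * g₀ * star c * a * star b * a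
    calc g₀ * star c * a * g₀ * star b * a = g₀ * (star c * a * g₀) * (star b * a) := by group
      _ = g₀ * (g₀ * (star c * a)) * (star b * a) := by rw [hg₀c (star c * a)]
      _ = g₀ * g₀ * star c * a * star b * a := by group
end

section
/- Let R be a finite-dimensional algebra over ℚ with Jacobson radical J, and suppose every ℤ-order Γ ⊂ R has the property that U(Γ) contains no free abelian subgroup of rank 2. If θ₁, θ₂ ∈ J are ℤ-linearly independent elements of an order Γ with θ₁² = θ₂² = θ₁θ₂ = θ₂θ₁ = 0, then a contradiction arises; hence no such pair exists, i.e., the ℚ-span of {θ ∈ J ∩ Γ : θ² = 0, θ commuting with all such elements, pairwise products 0} has dimension at most 1. -/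
/-- If every ℤ-order Γ in a finite-dimensional ℚ-algebra R has unit group containing
no free abelian subgroup of rank 2, then no ℤ-order contains ℤ-linearly independent
elements θ₁, θ₂ of the Jacobson radical with θ₁² = θ₂² = θ₁θ₂ = θ₂θ₁ = 0. -/
theorem stmt_15 {R : Type*} [Ring R] [Algebra ℚ R] [FiniteDimensional ℚ R]
    (horders : ∀ Γ : Subring R,
      (AddSubgroup.toIntSubmodule Γ.toAddSubgroup).FG →
      Submodule.span ℚ (Γ : Set R) = ⊤ →
      ∀ f : Multiplicative (ℤ × ℤ) →* Γˣ, ¬ Function.Injective f) :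
    ¬ ∃ (Γ : Subring R) (θ₁ θ₂ : R),
      (AddSubgroup.toIntSubmodule Γ.toAddSubgroup).FG ∧
      Submodule.span ℚ (Γ : Set R) = ⊤ ∧
      θ₁ ∈ Γ ∧ θ₂ ∈ Γ ∧
      θ₁ ∈ (⊥ : Ideal R).jacobson ∧ θ₂ ∈ (⊥ : Ideal R).jacobson ∧
      (∀ m n : ℤ, m • θ₁ + n • θ₂ = 0 → m = 0 ∧ n = 0) ∧
      θ₁ * θ₁ = 0 ∧ θ₂ * θ₂ = 0 ∧ θ₁ * θ₂ = 0 ∧ θ₂ * θ₁ = 0 := by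
  rintro ⟨Γ, θ₁, θ₂, hFG, hspan, h1, h2, -, -, hlin, h11, h22, h12, h21⟩
  set t₁ : Γ := ⟨θ₁, h1⟩ with ht₁
  set t₂ : Γ := ⟨θ₂, h2⟩ with ht₂
  have e11 : t₁ * t₁ = 0 := Subtype.ext h11
  have e22 : t₂ * t₂ = 0 := Subtype.ext h22
  have e12 : t₁ * t₂ = 0 := Subtype.ext h12
  have e21 : t₂ * t₁ = 0 := Subtype.ext h21
  have mul0 : ∀ m n m' n' : ℤ, (m • t₁ + n • t₂) * (m' • t₁ + n' • t₂) = 0 := by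
    intro m n m' n'
    simp only [add_mul, mul_add, smul_mul_assoc, mul_smul_comm, e11, e22, e12, e21,
      smul_zero, add_zero, zero_add]
  have key : ∀ a b : ℤ × ℤ,
      (1 + a.1 • t₁ + a.2 • t₂) * (1 + b.1 • t₁ + b.2 • t₂)
        = 1 + (a.1 + b.1) • t₁ + (a.2 + b.2) • t₂ := by
    intro a b
    have h := mul0 a.1 a.2 b.1 b.2
    calc (1 + a.1 • t₁ + a.2 • t₂) * (1 + b.1 • t₁ + b.2 • t₂)
        = 1 + (b.1 • t₁ + b.2 • t₂) + (a.1 • t₁ + a.2 • t₂)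
            + (a.1 • t₁ + a.2 • t₂) * (b.1 • t₁ + b.2 • t₂) := by
          simp only [mul_add, add_mul, one_mul, mul_one]
          abel
      _ = 1 + (a.1 + b.1) • t₁ + (a.2 + b.2) • t₂ := by
          rw [h, add_zero, add_smul, add_smul]; abel
  have inv0 : ∀ a : ℤ × ℤ,
      (1 + a.1 • t₁ + a.2 • t₂) * (1 + (-a.1) • t₁ + (-a.2) • t₂) = 1 := by
    intro a
    simpa using key a (-a.1, -a.2)
  let u : ℤ × ℤ → Γˣ := fun a =>
    ⟨1 + a.1 • t₁ + a.2 • t₂, 1 + (-a.1) • t₁ + (-a.2) • t₂,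
      inv0 a, by simpa using inv0 (-a.1, -a.2)⟩
  let f : Multiplicative (ℤ × ℤ) →* Γˣ :=
    MonoidHom.mk' (fun p => u (Multiplicative.toAdd p)) (by
      intro a b
      apply Units.ext
      simpa [u] using (key (Multiplicative.toAdd a) (Multiplicative.toAdd b)).symm)
  apply horders Γ hFG hspan f
  intro a b hab
  set ma := (Multiplicative.toAdd a).1 with hma0
  set na := (Multiplicative.toAdd a).2 with hna0
  set mb := (Multiplicative.toAdd b).1 with hmb0
  set nb := (Multiplicative.toAdd b).2 with hnb0
  have hval : (1 : Γ) + ma • t₁ + na • t₂ = 1 + mb • t₁ + nb • t₂ := by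
    have := congrArg Units.val hab
    simpa [f, u] using this
  have hval' : (1 : R) + ma • θ₁ + na • θ₂ = 1 + mb • θ₁ + nb • θ₂ := by
    have := congrArg (Subtype.val : Γ → R) hval
    push_cast [ht₁, ht₂] at this
    exact this
  have h0 : (1 + ma • θ₁ + na • θ₂) - (1 + mb • θ₁ + nb • θ₂) = (0 : R) :=
    sub_eq_zero.mpr hval'
  have hR : (ma - mb) • θ₁ + (na - nb) • θ₂ = 0 := by
    rw [← h0, sub_smul, sub_smul]; abel
  obtain ⟨hm, hn⟩ := hlin _ _ hR
  apply Multiplicative.toAdd.injective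
  exact Prod.ext (by omega) (by omega)
end
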